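/- Symmetry is not redundant in Young's axiomatization of the Shapley value: On set functions v : (subsets of {1,2,3}) → ℝ, define the fixed-permutation marginal method m by m_i(v) = v({1,…,i}) − v({1,…,i−1}) for i = 1, 2, 3. Then m satisfies (a) Efficiency: ∑_{i=1}^{3} m_i(v) = v({1,2,3}) − v(∅) for all v; (b) Missingness/Dummy: if v(S ∪ {i}) = v(S) for all S, then m_i(v) = 0; and (c) Consistency/Strong Monotonicity: if v₂(S ∪ {i}) − v₂(S) ≥ v₁(S ∪ {i}) − v₁(S) for all S ⊆ {1,2,3} \ {i}, then m_i(v₂) ≥ m_i(v₁). Nevertheless, there exists a set function v such that m(v) differs from the Shapley value of v; hence Efficiency, Missingness and Consistency alone do not characterize the Shapley value. -/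
import Mathlib


open scoped Classical

noncomputable def shapley {N : Type*} [Fintype N] [DecidableEq N]
    (v : Finset N → ℝ) (i : N) : ℝ :=
  ∑ S ∈ (Finset.univ.erase i).powerset,
    ((S.card.factorial : ℝ) * ((Fintype.card N - S.card - 1).factorial) /
      (Fintype.card N).factorial) * (v (insert i S) - v S)


/-- The fixed-permutation marginal method on three players: player `i`
receives its marginal contribution when players are added in the fixed order
`1, 2, 3`. -/
noncomputable def fixedPermMarginal (v : Finset (Fin 3) → ℝ) (i : Fin 3) : ℝ :=
  v (Finset.univ.filter fun j => j ≤ i) - v (Finset.univ.filter fun j => j < i)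

lemma filt_le (i : Fin 3) : Finset.univ.filter (fun j => j ≤ i)
    = insert i (Finset.univ.filter fun j => j < i) := by revert i; decide

lemma not_mem_filt (i : Fin 3) : i ∉ Finset.univ.filter (fun j => j < i) := by
  revert i; decide

lemma pw : (Finset.univ.erase (0 : Fin 3)).powerset
    = ({∅, {1}, {2}, {1,2}} : Finset (Finset (Fin 3))) := by decide

/-- **Symmetry is not redundant in Young's axiomatization of the Shapley
value** (Appendix of the paper): the fixed-permutation marginal method
satisfies Efficiency, Missingness/Dummy, and Consistency/Strong Monotonicity,
yet differs from the Shapley value on some set function. Hence these three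
axioms alone do not characterize the Shapley value. -/
theorem symmetry_not_redundant :
    (∀ v : Finset (Fin 3) → ℝ,
      ∑ i, fixedPermMarginal v i = v Finset.univ - v ∅) ∧
    (∀ (v : Finset (Fin 3) → ℝ) (i : Fin 3),
      (∀ S : Finset (Fin 3), v (insert i S) = v S) →
      fixedPermMarginal v i = 0) ∧
    (∀ (v₁ v₂ : Finset (Fin 3) → ℝ) (i : Fin 3),
      (∀ S : Finset (Fin 3), i ∉ S →
        v₁ (insert i S) - v₁ S ≤ v₂ (insert i S) - v₂ S) →
      fixedPermMarginal v₁ i ≤ fixedPermMarginal v₂ i) ∧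
    (∃ (v : Finset (Fin 3) → ℝ) (i : Fin 3),
      fixedPermMarginal v i ≠ shapley v i) := by
  refine ⟨?_, ?_, ?_, ?_⟩
  · intro v
    simp only [fixedPermMarginal, Fin.sum_univ_three]
    have h1 : (Finset.univ.filter fun j => j ≤ (0:Fin 3)) = {0} := by decide
    have h2 : (Finset.univ.filter fun j => j < (0:Fin 3)) = ∅ := by decide
    have h3 : (Finset.univ.filter fun j => j ≤ (1:Fin 3)) = {0,1} := by decide
    have h4 : (Finset.univ.filter fun j => j < (1:Fin 3)) = {0} := by decide
    have h5 : (Finset.univ.filter fun j => j ≤ (2:Fin 3)) = Finset.univ := by decide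
    have h6 : (Finset.univ.filter fun j => j < (2:Fin 3)) = {0,1} := by decide
    rw [h1, h2, h3, h4, h5, h6]; ring
  · intro v i hv
    rw [fixedPermMarginal, filt_le, hv]
    ring
  · intro v₁ v₂ i h
    rw [fixedPermMarginal, fixedPermMarginal, filt_le]
    exact h _ (not_mem_filt i)
  · refine ⟨fun S => if S = Finset.univ then 1 else 0, 0, ?_⟩
    have hL : fixedPermMarginal (fun S => if S = Finset.univ then 1 else 0) 0 = 0 := by
      rw [fixedPermMarginal, filt_le]
      have h1 : insert (0:Fin 3) (Finset.univ.filter fun j : Fin 3 => j < 0) ≠ Finset.univ := by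
        decide
      have h2 : (Finset.univ.filter fun j : Fin 3 => j < 0) ≠ Finset.univ := by decide
      have h3 : ({0}:Finset (Fin 3)) ≠ Finset.univ := by decide
      have h4 : (∅:Finset (Fin 3)) ≠ Finset.univ := by decide
      simp [h1, h2, h3, h4]
    rw [hL, shapley, pw]
    rw [Finset.sum_insert (by decide), Finset.sum_insert (by decide),
        Finset.sum_insert (by decide), Finset.sum_singleton]
    have e1 : insert (0:Fin 3) (∅ : Finset (Fin 3)) ≠ Finset.univ := by decide
    have e2 : insert (0:Fin 3) ({1} : Finset (Fin 3)) ≠ Finset.univ := by decide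
    have e3 : insert (0:Fin 3) ({2} : Finset (Fin 3)) ≠ Finset.univ := by decide
    have e4 : insert (0:Fin 3) ({1,2} : Finset (Fin 3)) = Finset.univ := by decide
    have n1 : (∅:Finset (Fin 3)) ≠ Finset.univ := by decide
    have n2 : ({1}:Finset (Fin 3)) ≠ Finset.univ := by decide
    have n3 : ({2}:Finset (Fin 3)) ≠ Finset.univ := by decide
    have n4 : ({1,2}:Finset (Fin 3)) ≠ Finset.univ := by decide
    have h0 : ({0}:Finset (Fin 3)) ≠ Finset.univ := by decide
    have c4 : ({1,2}:Finset (Fin 3)).card = 2 := by decide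
    simp [e1, e2, e3, e4, n1, n2, n3, n4, c4, h0, Nat.factorial]
    norm_num
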